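/- arXiv:1406.4629 — 2 statements merged into one kernel-verified Lean document; each statement's English description precedes it below -/
import Mathlib

section
/- Assume sup_{v>0} F(v) > 0 and set α₀ := (2 sup_{v>0} F(v))^{1/2}. Suppose either (a) α < α₀, S := {v > 0 : α² = 2F(v)} is nonempty with B := min S, and ℓ := ∫₀^B dr/√(α² − 2F(r)) = ∞, or (b) α = α₀ and α₀² = 2F(v̄) for some v̄ > 0, with B the minimum of such v̄. Then the stationary problem (E): v'' + f(v) = 0, v(0) = 0, v'(0) = α, has a unique solution Ṽ_α; it is defined on all of [0,∞), satisfies Ṽ_α'(x) > 0 for all x ≥ 0, and Ṽ_α(x) → B as x → ∞. -/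
open Set Filter Topology MeasureTheory

noncomputable section

/-- `F(v) = ∫₀^v f(s) ds`. -/
def Fint (f : ℝ → ℝ) (v : ℝ) : ℝ := ∫ s in (0:ℝ)..v, f s

def ft (f : ℝ → ℝ) : ℝ → ℝ := fun s => f (max s 0)

def gf (f : ℝ → ℝ) (α : ℝ) : ℝ → ℝ := fun r => Real.sqrt (α ^ 2 - 2 * Fint (ft f) r)

def Ph (f : ℝ → ℝ) (α : ℝ) : ℝ → ℝ := fun v => ∫ r in (0:ℝ)..v, (gf f α r)⁻¹

lemma ft_cont {f : ℝ → ℝ} (hf : ContDiffOn ℝ 1 f (Ici 0)) : Continuous (ft f) :=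
  hf.continuousOn.comp_continuous (continuous_id.max continuous_const)
    (fun x => mem_Ici.2 (le_max_right x 0))

lemma ft_eq {f : ℝ → ℝ} {s : ℝ} (hs : 0 ≤ s) : ft f s = f s := by
  simp [ft, max_eq_left hs]

lemma ft_zero {f : ℝ → ℝ} (hf0 : f 0 = 0) {s : ℝ} (hs : s ≤ 0) : ft f s = 0 := by
  simp [ft, max_eq_right hs, hf0]

lemma Fder {f : ℝ → ℝ} (hf : ContDiffOn ℝ 1 f (Ici 0)) (v : ℝ) :
    HasDerivAt (Fint (ft f)) (ft f v) v := by
  have hc : Continuous (ft f) := ft_cont hf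
  exact intervalIntegral.integral_hasDerivAt_right (hc.intervalIntegrable _ _)
    (hc.stronglyMeasurableAtFilter _ _) hc.continuousAt

lemma Fint_cont {f : ℝ → ℝ} (hf : ContDiffOn ℝ 1 f (Ici 0)) : Continuous (Fint (ft f)) :=
  Differentiable.continuous (fun v => (Fder hf v).differentiableAt)

lemma Fint_ft_eq {f : ℝ → ℝ} {v : ℝ} (hv : 0 ≤ v) : Fint (ft f) v = Fint f v := by
  unfold Fint
  refine intervalIntegral.integral_congr (fun s hs => ?_)
  rw [uIcc_of_le hv] at hs
  exact ft_eq hs.1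

lemma Fint_ft_neg {f : ℝ → ℝ} (hf0 : f 0 = 0) {v : ℝ} (hv : v ≤ 0) : Fint (ft f) v = 0 := by
  unfold Fint
  rw [intervalIntegral.integral_congr (g := fun _ => (0:ℝ)) (fun s hs => ?_)]
  · simp
  · rw [uIcc_of_ge hv] at hs
    exact ft_zero hf0 hs.2

lemma Fint_zero (f : ℝ → ℝ) : Fint f 0 = 0 := intervalIntegral.integral_same

lemma gf_cont {f : ℝ → ℝ} {α : ℝ} (hf : ContDiffOn ℝ 1 f (Ici 0)) : Continuous (gf f α) :=
  (continuous_const.sub (continuous_const.mul (Fint_cont hf))).sqrt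

/-- positivity of `α² - 2F̃(r)` on `Iio B` -/
lemma gsq_pos {f : ℝ → ℝ} {α B : ℝ} (hα : 0 < α) (hf : ContDiffOn ℝ 1 f (Ici 0))
    (hf0 : f 0 = 0) (hB : IsLeast {v : ℝ | 0 < v ∧ α ^ 2 = 2 * Fint f v} B) :
    ∀ r < B, 0 < α ^ 2 - 2 * Fint (ft f) r := by
  intro r hr
  rcases le_or_gt r 0 with h0 | h0
  · rw [Fint_ft_neg hf0 h0]; simpa using pow_pos hα 2
  · by_contra hcon
    push_neg at hcon
    -- α² ≤ 2 F̃ r, find c ∈ (0, r] with 2 F̃ c = α², contradicting minimality of B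
    have hFc : Continuous (Fint (ft f)) := Fint_cont hf
    have h05 : α ^ 2 / 2 ∈ Icc (Fint (ft f) 0) (Fint (ft f) r) := by
      rw [Fint_zero]
      constructor
      · positivity
      · linarith
    obtain ⟨c, hc, hceq⟩ := intermediate_value_Icc h0.le hFc.continuousOn h05
    have hc0 : 0 < c := by
      rcases hc.1.lt_or_eq with h | h
      · exact h
      · exfalso; rw [← h, Fint_zero] at hceq
        have := pow_pos hα 2; linarith
    have hcS : c ∈ {v : ℝ | 0 < v ∧ α ^ 2 = 2 * Fint f v} := by
      refine ⟨hc0, ?_⟩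
      rw [← Fint_ft_eq hc0.le, hceq]; ring
    exact absurd (hB.2 hcS) (not_le.2 (lt_of_le_of_lt hc.2 hr))

lemma gf_pos {f : ℝ → ℝ} {α B : ℝ} (hα : 0 < α) (hf : ContDiffOn ℝ 1 f (Ici 0))
    (hf0 : f 0 = 0) (hB : IsLeast {v : ℝ | 0 < v ∧ α ^ 2 = 2 * Fint f v} B)
    {r : ℝ} (hr : r < B) : 0 < gf f α r :=
  Real.sqrt_pos.2 (gsq_pos hα hf hf0 hB r hr)

section PhLemmas

variable {f : ℝ → ℝ} {α B : ℝ} (hα : 0 < α) (hf : ContDiffOn ℝ 1 f (Ici 0))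
  (hf0 : f 0 = 0) (hB : IsLeast {v : ℝ | 0 < v ∧ α ^ 2 = 2 * Fint f v} B)

include hα hf hf0 hB

lemma inv_gf_contOn : ContinuousOn (fun r => (gf f α r)⁻¹) (Iio B) :=
  ContinuousOn.inv₀ (gf_cont hf).continuousOn
    (fun r hr => (gf_pos hα hf hf0 hB hr).ne')

lemma Ph_hasDeriv {v : ℝ} (hv : v < B) : HasDerivAt (Ph f α) ((gf f α v)⁻¹) v := by
  have hB0 : 0 < B := hB.1.1
  have hsub : uIcc (0:ℝ) v ⊆ Iio B := by
    rw [uIcc]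
    intro x hx
    exact lt_of_le_of_lt hx.2 (max_lt hB0 hv)
  exact intervalIntegral.integral_hasDerivAt_right
    (((inv_gf_contOn hα hf hf0 hB).mono hsub).intervalIntegrable)
    ((inv_gf_contOn hα hf hf0 hB).stronglyMeasurableAtFilter isOpen_Iio v hv)
    (((inv_gf_contOn hα hf hf0 hB) v hv).continuousAt (Iio_mem_nhds hv))

lemma Ph_contOn : ContinuousOn (Ph f α) (Iio B) :=
  fun v hv => (Ph_hasDeriv hα hf hf0 hB hv).continuousAt.continuousWithinAt

lemma Ph_strictMono : StrictMonoOn (Ph f α) (Iio B) := by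
  refine strictMonoOn_of_deriv_pos (convex_Iio B) (Ph_contOn hα hf hf0 hB) (fun x hx => ?_)
  rw [interior_Iio] at hx
  rw [(Ph_hasDeriv hα hf hf0 hB hx).deriv]
  exact inv_pos.2 (gf_pos hα hf hf0 hB hx)

lemma Ph_zero' : Ph f α 0 = 0 := intervalIntegral.integral_same

lemma Ph_neg {v : ℝ} (hv : v ≤ 0) : Ph f α v = v / α := by
  unfold Ph
  rw [intervalIntegral.integral_congr (g := fun _ => α⁻¹) (fun s hs => ?_)]
  · rw [intervalIntegral.integral_const, smul_eq_mul, sub_zero, ← div_eq_mul_inv]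
  · rw [uIcc_of_ge hv] at hs
    unfold gf
    rw [Fint_ft_neg hf0 hs.2, mul_zero, sub_zero, Real.sqrt_sq hα.le]

end PhLemmas

section PhMore

variable {f : ℝ → ℝ} {α B : ℝ} (hα : 0 < α) (hf : ContDiffOn ℝ 1 f (Ici 0))
  (hf0 : f 0 = 0) (hB : IsLeast {v : ℝ | 0 < v ∧ α ^ 2 = 2 * Fint f v} B)

include hα hf hf0 hB

/-- If `Ph` is bounded on `[0, B)`, then `1/g` is integrable on `(0, B]`. -/
lemma integrable_of_Ph_bddAbove (hbdd : BddAbove (Ph f α '' Ico 0 B)) :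
    IntervalIntegrable (fun r => (gf f α r)⁻¹) volume 0 B := by
  have hB0 : 0 < B := hB.1.1
  set L : ℝ := sSup (Ph f α '' Iio B) with hL
  have hmono : MonotoneOn (Ph f α) (Iio B) :=
    (Ph_strictMono hα hf hf0 hB).monotoneOn
  have hbdd' : BddAbove (Ph f α '' Iio B) := by
    obtain ⟨M, hM⟩ := hbdd
    refine ⟨max M 0, fun y hy => ?_⟩
    obtain ⟨v, hv, rfl⟩ := hy
    rcases le_or_gt 0 v with h0 | h0
    · exact le_max_of_le_left (hM ⟨v, ⟨h0, hv⟩, rfl⟩)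
    · rw [Ph_neg hα hf hf0 hB h0.le]
      refine le_max_of_le_right ?_
      have h1 : 0 ≤ -v / α := div_nonneg (by linarith) hα.le
      rw [neg_div] at h1; linarith
  have htend : Tendsto (Ph f α) (𝓝[<] B) (𝓝 L) :=
    hmono.tendsto_nhdsLT hbdd'
  -- extended function
  set Q : ℝ → ℝ := fun v => if v < B then Ph f α v else L with hQ
  have hQeq : ∀ v < B, Q v = Ph f α v := fun v hv => if_pos hv
  have hQc : ContinuousOn Q (Icc 0 B) := by
    intro x hx
    rcases lt_or_eq_of_le hx.2 with hxB | hxB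
    · have : ContinuousAt Q x := by
        have h1 : Q =ᶠ[𝓝 x] Ph f α := by
          filter_upwards [Iio_mem_nhds hxB] with y hy using hQeq y hy
        exact ((Ph_hasDeriv hα hf hf0 hB hxB).continuousAt).congr h1.symm
      exact this.continuousWithinAt
    · -- x = B
      subst hxB
      have hQB : Q x = L := if_neg (lt_irrefl x)
      rw [ContinuousWithinAt, hQB]
      have h2 : Tendsto Q (𝓝[<] x) (𝓝 L) := by
        refine htend.congr' ?_
        filter_upwards [self_mem_nhdsWithin] with y hy using (hQeq y hy).symm
      have hsub : 𝓝[Icc 0 x] x ≤ 𝓝[≤] x := nhdsWithin_mono _ (fun y hy => hy.2)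
      have h3 : Tendsto Q (𝓝[≤] x) (𝓝 L) := by
        rw [← Iio_union_right, nhdsWithin_union, tendsto_sup]
        refine ⟨h2, ?_⟩
        rw [nhdsWithin_singleton]
        simpa [hQB] using (tendsto_pure_nhds Q x)
      exact h3.mono_left hsub
  have hint : IntegrableOn (fun r => (gf f α r)⁻¹) (Ioc 0 B) := by
    refine intervalIntegral.integrableOn_deriv_of_nonneg hQc (fun x hx => ?_) (fun x hx => ?_)
    · have h1 : Q =ᶠ[𝓝 x] Ph f α := by
        filter_upwards [Iio_mem_nhds hx.2] with y hy using hQeq y hy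
      exact (Ph_hasDeriv hα hf hf0 hB hx.2).congr_of_eventuallyEq h1
    · exact (inv_pos.2 (gf_pos hα hf hf0 hB hx.2)).le
  rwa [intervalIntegrable_iff_integrableOn_Ioc_of_le hB0.le]

end PhMore

open Classical in
def Vs (f : ℝ → ℝ) (α B : ℝ) (x : ℝ) : ℝ :=
  if h : ∃ v, v < B ∧ Ph f α v = x then h.choose else 0

section VsLemmas

variable {f : ℝ → ℝ} {α B : ℝ} (hα : 0 < α) (hf : ContDiffOn ℝ 1 f (Ici 0))
  (hf0 : f 0 = 0) (hB : IsLeast {v : ℝ | 0 < v ∧ α ^ 2 = 2 * Fint f v} B)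
  (hni : ¬ IntervalIntegrable (fun r => (gf f α r)⁻¹) volume 0 B)

include hα hf hf0 hB hni

lemma Ph_surj : ∀ x : ℝ, ∃ v, v < B ∧ Ph f α v = x := by
  intro x
  have hB0 : 0 < B := hB.1.1
  rcases le_or_gt x 0 with hx | hx
  · refine ⟨α * x, ?_, ?_⟩
    · calc α * x ≤ 0 := mul_nonpos_iff.2 (Or.inl ⟨hα.le, hx⟩)
        _ < B := hB0
    · rw [Ph_neg hα hf hf0 hB (mul_nonpos_iff.2 (Or.inl ⟨hα.le, hx⟩)), mul_comm,
        mul_div_assoc, div_self hα.ne', mul_one]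
  · have hnb : ¬ BddAbove (Ph f α '' Ico 0 B) := by
      intro hbdd
      exact hni (integrable_of_Ph_bddAbove hα hf hf0 hB hbdd)
    rw [not_bddAbove_iff] at hnb
    obtain ⟨y, hy, hxy⟩ := hnb x
    obtain ⟨v₀, hv₀, rfl⟩ := hy
    have hc : ContinuousOn (Ph f α) (Icc 0 v₀) :=
      (Ph_contOn hα hf hf0 hB).mono (fun z hz => lt_of_le_of_lt hz.2 hv₀.2)
    have hmem : x ∈ Icc (Ph f α 0) (Ph f α v₀) := by
      rw [Ph_zero' hα hf hf0 hB]
      exact ⟨hx.le, hxy.le⟩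
    obtain ⟨c, hc', hceq⟩ := intermediate_value_Icc hv₀.1 hc hmem
    exact ⟨c, lt_of_le_of_lt hc'.2 hv₀.2, hceq⟩

lemma Vs_spec (x : ℝ) : Vs f α B x < B ∧ Ph f α (Vs f α B x) = x := by
  have h := Ph_surj hα hf hf0 hB hni x
  unfold Vs
  rw [dif_pos h]
  exact h.choose_spec

lemma Vs_leftInv {v : ℝ} (hv : v < B) : Vs f α B (Ph f α v) = v := by
  have h := Vs_spec hα hf hf0 hB hni (Ph f α v)
  exact (Ph_strictMono hα hf hf0 hB).injOn h.1 hv h.2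

lemma Vs_strictMono : StrictMono (Vs f α B) := by
  intro x y hxy
  by_contra hcon
  push_neg at hcon
  have h1 := Vs_spec hα hf hf0 hB hni x
  have h2 := Vs_spec hα hf hf0 hB hni y
  have := (Ph_strictMono hα hf hf0 hB).monotoneOn h2.1 h1.1 hcon
  rw [h1.2, h2.2] at this
  exact absurd this (not_le.2 hxy)

lemma Vs_continuousAt (x : ℝ) : ContinuousAt (Vs f α B) x := by
  have hVx := Vs_spec hα hf hf0 hB hni x
  rw [ContinuousAt, tendsto_order]
  constructor
  · intro a ha
    have haB : a < B := lt_trans ha hVx.1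
    have hPa : Ph f α a < x := by
      have := (Ph_strictMono hα hf hf0 hB) haB hVx.1 ha
      rwa [hVx.2] at this
    filter_upwards [Ioi_mem_nhds hPa] with y hy
    by_contra hcon
    push_neg at hcon
    have hVy := Vs_spec hα hf hf0 hB hni y
    have := (Ph_strictMono hα hf hf0 hB).monotoneOn hVy.1 haB hcon
    rw [hVy.2] at this
    exact absurd this (not_le.2 hy)
  · intro a ha
    rcases lt_or_ge a B with haB | haB
    · have hPa : x < Ph f α a := by
        have := (Ph_strictMono hα hf hf0 hB) hVx.1 haB ha
        rwa [hVx.2] at this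
      filter_upwards [Iio_mem_nhds hPa] with y hy
      by_contra hcon
      push_neg at hcon
      have hVy := Vs_spec hα hf hf0 hB hni y
      have := (Ph_strictMono hα hf hf0 hB).monotoneOn haB hVy.1 hcon
      rw [hVy.2] at this
      exact absurd this (not_le.2 hy)
    · filter_upwards with y
      exact lt_of_lt_of_le (Vs_spec hα hf hf0 hB hni y).1 haB

lemma Vs_hasDeriv (x : ℝ) : HasDerivAt (Vs f α B) (gf f α (Vs f α B x)) x := by
  have hVx := Vs_spec hα hf hf0 hB hni x
  have h := HasDerivAt.of_local_left_inverse (Vs_continuousAt hα hf hf0 hB hni x)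
    (Ph_hasDeriv hα hf hf0 hB hVx.1) (inv_ne_zero (gf_pos hα hf hf0 hB hVx.1).ne')
    (by filter_upwards with y using (Vs_spec hα hf hf0 hB hni y).2)
  rwa [inv_inv] at h

lemma Vs_zero : Vs f α B 0 = 0 := by
  have := Vs_leftInv hα hf hf0 hB hni (lt_of_lt_of_le hB.1.1 le_rfl : (0:ℝ) < B)
  rwa [Ph_zero' hα hf hf0 hB] at this

end VsLemmas

section VsDeriv

variable {f : ℝ → ℝ} {α B : ℝ} (hα : 0 < α) (hf : ContDiffOn ℝ 1 f (Ici 0))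
  (hf0 : f 0 = 0) (hB : IsLeast {v : ℝ | 0 < v ∧ α ^ 2 = 2 * Fint f v} B)
  (hni : ¬ IntervalIntegrable (fun r => (gf f α r)⁻¹) volume 0 B)

include hα hf hf0 hB

lemma gf_hasDeriv {r : ℝ} (hr : r < B) :
    HasDerivAt (gf f α) (-(ft f r) / gf f α r) r := by
  have h1 : HasDerivAt (fun r => α ^ 2 - 2 * Fint (ft f) r) (-(2 * ft f r)) r := by
    simpa using ((Fder hf r).const_mul 2).const_sub (α ^ 2)
  have h2 := h1.sqrt (gsq_pos hα hf hf0 hB r hr).ne'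
  have hgpos := gf_pos hα hf hf0 hB hr
  refine h2.congr_deriv ?_
  rw [show Real.sqrt (α ^ 2 - 2 * Fint (ft f) r) = gf f α r from rfl]
  field_simp

lemma gf_zero_eq : gf f α 0 = α := by
  unfold gf
  rw [Fint_zero, mul_zero, sub_zero, Real.sqrt_sq hα.le]

include hni

lemma Vs_deriv_eq : deriv (Vs f α B) = fun x => gf f α (Vs f α B x) :=
  funext fun x => (Vs_hasDeriv hα hf hf0 hB hni x).deriv

lemma Vs_deriv_zero : deriv (Vs f α B) 0 = α := by
  rw [Vs_deriv_eq hα hf hf0 hB hni]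
  show gf f α (Vs f α B 0) = α
  rw [Vs_zero hα hf hf0 hB hni, gf_zero_eq hα hf hf0 hB]

lemma Vs_deriv2 (x : ℝ) :
    HasDerivAt (deriv (Vs f α B)) (-(ft f (Vs f α B x))) x := by
  rw [Vs_deriv_eq hα hf hf0 hB hni]
  have hVx := Vs_spec hα hf hf0 hB hni x
  have h := (gf_hasDeriv hα hf hf0 hB hVx.1).comp x (Vs_hasDeriv hα hf hf0 hB hni x)
  have hgne := (gf_pos hα hf hf0 hB hVx.1).ne'
  refine h.congr_deriv ?_
  field_simp

lemma Vs_nonneg {x : ℝ} (hx : 0 ≤ x) : 0 ≤ Vs f α B x := by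
  have := (Vs_strictMono hα hf hf0 hB hni).monotone hx
  rwa [Vs_zero hα hf hf0 hB hni] at this

lemma Vs_tendsto : Tendsto (Vs f α B) atTop (𝓝 B) := by
  have hbdd : BddAbove (range (Vs f α B)) :=
    ⟨B, fun y hy => by obtain ⟨x, rfl⟩ := hy; exact (Vs_spec hα hf hf0 hB hni x).1.le⟩
  have hmono := (Vs_strictMono hα hf hf0 hB hni).monotone
  have ht := tendsto_atTop_ciSup hmono hbdd
  have heq : (⨆ x, Vs f α B x) = B := by
    refine le_antisymm (ciSup_le fun x => (Vs_spec hα hf hf0 hB hni x).1.le) ?_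
    by_contra hcon
    push_neg at hcon
    set c := ((⨆ x, Vs f α B x) + B) / 2 with hc
    have hc1 : (⨆ x, Vs f α B x) < c := by
      rw [hc]; linarith
    have hc2 : c < B := by rw [hc]; linarith
    have h3 : Vs f α B (Ph f α c) = c := Vs_leftInv hα hf hf0 hB hni hc2
    have h4 : Vs f α B (Ph f α c) ≤ ⨆ x, Vs f α B x := le_ciSup hbdd _
    rw [h3] at h4
    linarith
  rwa [heq] at ht

end VsDeriv

section CaseB

variable {f : ℝ → ℝ} {α B : ℝ} (hα : 0 < α) (hf : ContDiffOn ℝ 1 f (Ici 0))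
  (hf0 : f 0 = 0) (hB : IsLeast {v : ℝ | 0 < v ∧ α ^ 2 = 2 * Fint f v} B)

include hα hf hf0 hB

lemma hni_of_caseB (hble : ∀ v : ℝ, 0 ≤ v → 2 * Fint f v ≤ α ^ 2) :
    ¬ IntervalIntegrable (fun r => (gf f α r)⁻¹) volume 0 B := by
  intro hI
  have hB0 : 0 < B := hB.1.1
  have hFB : α ^ 2 = 2 * Fint f B := hB.1.2
  have hFtB : Fint (ft f) B = α ^ 2 / 2 := by rw [Fint_ft_eq hB0.le]; linarith
  -- global max of F̃ at B
  have hmax : ∀ v : ℝ, Fint (ft f) v ≤ Fint (ft f) B := by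
    intro v
    rw [hFtB]
    rcases le_or_gt 0 v with h0 | h0
    · rw [Fint_ft_eq h0]; linarith [hble v h0]
    · rw [Fint_ft_neg hf0 h0.le]; positivity
  have hfB : f B = 0 := by
    have hloc : IsLocalMax (Fint (ft f)) B := Filter.Eventually.of_forall hmax
    have := hloc.hasDerivAt_eq_zero (Fder hf B)
    rwa [ft_eq hB0.le] at this
  -- Lipschitz bound near B
  have hcd : ContDiffAt ℝ 1 f B := hf.contDiffAt (Ici_mem_nhds hB0)
  obtain ⟨K, t, ht, hlip⟩ := hcd.exists_lipschitzOnWith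
  obtain ⟨ε, hε, hball⟩ := Metric.mem_nhds_iff.1 ht
  set δ : ℝ := min (ε / 2) (B / 2) with hδ
  have hδ0 : 0 < δ := lt_min (by linarith) (by linarith)
  have hδB : 0 < B - δ := by
    have : δ ≤ B / 2 := min_le_right _ _
    linarith
  have hsubt : Icc (B - δ) B ⊆ t := by
    intro s hs
    apply hball
    rw [Metric.mem_ball, Real.dist_eq, abs_lt]
    have h1 : δ ≤ ε / 2 := min_le_left _ _
    constructor <;> [skip; skip] <;> nlinarith [hs.1, hs.2]
  have hKb : (0:ℝ) < 2 * (K:ℝ) + 1 := by positivity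
  set Kb : ℝ := 2 * (K:ℝ) + 1 with hKbdef
  -- pointwise bound f s ≤ K (B - s) on [B-δ, B]
  have hfs : ∀ s ∈ Icc (B - δ) B, ft f s ≤ (K:ℝ) * (B - s) := by
    intro s hs
    have h1 := hlip.dist_le_mul s (hsubt hs) B (hsubt ⟨by linarith [hδ0], le_rfl⟩)
    rw [Real.dist_eq, Real.dist_eq, hfB, sub_zero] at h1
    have h2 : |s - B| = B - s := by rw [abs_sub_comm, abs_of_nonneg (by linarith [hs.2])]
    rw [h2] at h1
    calc ft f s = f s := ft_eq (by linarith [hs.1] : (0:ℝ) ≤ s)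
      _ ≤ |f s| := le_abs_self _
      _ ≤ (K:ℝ) * (B - s) := h1
  -- quadratic bound on the energy gap
  have hgap : ∀ r ∈ Ico (B - δ) B, α ^ 2 - 2 * Fint (ft f) r ≤ Kb * (B - r) ^ 2 := by
    intro r hr
    have hrB : r ≤ B := hr.2.le
    have hcont : Continuous (ft f) := ft_cont hf
    have hdiff : Fint (ft f) B - Fint (ft f) r = ∫ s in r..B, ft f s := by
      unfold Fint
      rw [intervalIntegral.integral_interval_sub_left (hcont.intervalIntegrable _ _)
        (hcont.intervalIntegrable _ _)]
    have hbound : (∫ s in r..B, ft f s) ≤ (B - r) * ((K:ℝ) * (B - r)) := by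
      have h1 : (∫ s in r..B, ft f s) ≤ ∫ _ in r..B, (K:ℝ) * (B - r) := by
        apply intervalIntegral.integral_mono_on hrB (hcont.intervalIntegrable _ _)
          (intervalIntegrable_const)
        intro s hs
        calc ft f s ≤ (K:ℝ) * (B - s) := hfs s ⟨le_trans hr.1 hs.1, hs.2⟩
          _ ≤ (K:ℝ) * (B - r) := by
            apply mul_le_mul_of_nonneg_left (by linarith [hs.1]) K.coe_nonneg
      rwa [intervalIntegral.integral_const, smul_eq_mul] at h1
    have : α ^ 2 - 2 * Fint (ft f) r = 2 * (Fint (ft f) B - Fint (ft f) r) := by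
      rw [hFtB]; ring
    rw [this, hdiff]
    calc 2 * ∫ s in r..B, ft f s ≤ 2 * ((B - r) * ((K:ℝ) * (B - r))) := by linarith [hbound]
      _ ≤ Kb * (B - r) ^ 2 := by rw [hKbdef]; nlinarith [hr.2, hδ0, sq_nonneg (B - r)]
  -- so 1/g ≥ (√Kb)⁻¹ (B - r)⁻¹ on Ioo (B-δ) B
  have hginv : ∀ r ∈ Ioo (B - δ) B, (B - r)⁻¹ ≤ Real.sqrt Kb * (gf f α r)⁻¹ := by
    intro r hr
    have hBr : 0 < B - r := by linarith [hr.2]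
    have hg0 : 0 < gf f α r := gf_pos hα hf hf0 hB hr.2
    have h1 : gf f α r ≤ Real.sqrt Kb * (B - r) := by
      have h2 : gf f α r ≤ Real.sqrt (Kb * (B - r) ^ 2) :=
        Real.sqrt_le_sqrt (hgap r ⟨hr.1.le, hr.2⟩)
      rwa [Real.sqrt_mul hKb.le, Real.sqrt_sq hBr.le] at h2
    have hsK : 0 < Real.sqrt Kb := Real.sqrt_pos.2 hKb
    have h2 : (Real.sqrt Kb * (B - r))⁻¹ ≤ (gf f α r)⁻¹ := by
      apply inv_anti₀ hg0 h1
    calc (B - r)⁻¹ = Real.sqrt Kb * (Real.sqrt Kb * (B - r))⁻¹ := by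
          rw [mul_inv]
          rw [← mul_assoc, mul_inv_cancel₀ hsK.ne', one_mul]
      _ ≤ Real.sqrt Kb * (gf f α r)⁻¹ := mul_le_mul_of_nonneg_left h2 hsK.le
  -- integrability of 1/(B-r) on (B-δ, B) : contradiction
  have hIOn : IntegrableOn (fun r => (gf f α r)⁻¹) (Ioo (B - δ) B) := by
    have h1 : IntegrableOn (fun r => (gf f α r)⁻¹) (Ioc 0 B) :=
      (intervalIntegrable_iff_integrableOn_Ioc_of_le hB0.le).1 hI
    exact h1.mono_set (fun r hr => ⟨by linarith [hr.1, hδB], hr.2.le⟩)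
  have hIBr : IntegrableOn (fun r => (B - r)⁻¹) (Ioo (B - δ) B) := by
    refine (hIOn.const_mul (Real.sqrt Kb)).mono' ?_ ?_
    · refine ContinuousOn.aestronglyMeasurable ?_ measurableSet_Ioo
      refine ContinuousOn.inv₀ (by fun_prop) (fun r hr => by simp; linarith [hr.2])
    · filter_upwards [ae_restrict_mem measurableSet_Ioo] with r hr
      have hBr : 0 < B - r := by linarith [hr.2]
      rw [Real.norm_eq_abs, abs_of_nonneg (inv_nonneg.2 hBr.le)]
      exact hginv r hr
  have hIsub : IntervalIntegrable (fun r => (r - B)⁻¹) volume (B - δ) B := by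
    have h1 : IntegrableOn (fun r => (r - B)⁻¹) (Ioo (B - δ) B) := by
      have h0 : IntegrableOn (fun r => -(B - r)⁻¹) (Ioo (B - δ) B) := hIBr.neg
      refine h0.congr_fun (fun r _ => ?_) measurableSet_Ioo
      rw [show (r - B)⁻¹ = -(B - r)⁻¹ by rw [← inv_neg, neg_sub]]
    rw [intervalIntegrable_iff_integrableOn_Ioc_of_le (by linarith)]
    rwa [integrableOn_Ioc_iff_integrableOn_Ioo]
  rw [intervalIntegrable_sub_inv_iff] at hIsub
  rcases hIsub with h | h
  · linarith
  · exact h (right_mem_uIcc)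

end CaseB

/-- Lemma 2.7 (ii): in the case `α < α₀` with `ℓ = ∞` (expressed by
non-integrability of `(√(α² - 2F(r)))⁻¹` on `(0,B)`), or `α = α₀` with the supremum of `F`
attained (expressed by `2F(v) ≤ α²` for all `v ≥ 0` together with the existence of a
minimal `v̄ > 0` with `2F(v̄) = α²`), the stationary problem `v'' + f(v) = 0`, `v(0) = 0`,
`v'(0) = α` has a unique solution `Ṽ_α`, defined on all of `[0, ∞)`, strictly increasing,
with `Ṽ_α(x) → B` as `x → ∞`. -/
theorem statement12 (f : ℝ → ℝ) (α : ℝ) (hα : 0 < α)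
    (hf : ContDiffOn ℝ 1 f (Ici 0)) (hf0 : f 0 = 0)
    (hsup : ∃ v : ℝ, 0 < v ∧ 0 < Fint f v)
    (B : ℝ)
    (hcase :
      ((∃ v : ℝ, 0 < v ∧ α ^ 2 < 2 * Fint f v) ∧
        IsLeast {v : ℝ | 0 < v ∧ α ^ 2 = 2 * Fint f v} B ∧
        ¬ IntervalIntegrable (fun r => (Real.sqrt (α ^ 2 - 2 * Fint f r))⁻¹)
            MeasureTheory.volume 0 B) ∨
      ((∀ v : ℝ, 0 ≤ v → 2 * Fint f v ≤ α ^ 2) ∧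
        IsLeast {v : ℝ | 0 < v ∧ α ^ 2 = 2 * Fint f v} B)) :
    ∃ V : ℝ → ℝ,
      (V 0 = 0 ∧ deriv V 0 = α ∧
        ∀ x ∈ Ici (0:ℝ), HasDerivAt V (deriv V x) x ∧
          HasDerivAt (deriv V) (-(f (V x))) x) ∧
      (∀ W : ℝ → ℝ,
        (W 0 = 0 ∧ deriv W 0 = α ∧
          ∀ x ∈ Ici (0:ℝ), HasDerivAt W (deriv W x) x ∧
            HasDerivAt (deriv W) (-(f (W x))) x) →
        ∀ x ∈ Ici (0:ℝ), W x = V x) ∧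
      (∀ x ∈ Ici (0:ℝ), 0 < deriv V x) ∧
      Tendsto V atTop (𝓝 B) := by
  have hB : IsLeast {v : ℝ | 0 < v ∧ α ^ 2 = 2 * Fint f v} B := by
    rcases hcase with ⟨_, hB, _⟩ | ⟨_, hB⟩ <;> exact hB
  have hB0 : 0 < B := hB.1.1
  have hni : ¬ IntervalIntegrable (fun r => (gf f α r)⁻¹) volume 0 B := by
    rcases hcase with ⟨_, _, hni⟩ | ⟨hble, _⟩
    · intro hI
      apply hni
      rw [intervalIntegrable_iff_integrableOn_Ioc_of_le hB0.le] at hI ⊢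
      refine hI.congr_fun (fun r hr => ?_) measurableSet_Ioc
      unfold gf
      beta_reduce
      rw [Fint_ft_eq hr.1.le]
    · exact hni_of_caseB hα hf hf0 hB hble
  refine ⟨Vs f α B, ⟨Vs_zero hα hf hf0 hB hni, Vs_deriv_zero hα hf hf0 hB hni,
    fun x hx => ⟨?_, ?_⟩⟩, ?_, fun x hx => ?_, Vs_tendsto hα hf hf0 hB hni⟩
  · rw [(Vs_hasDeriv hα hf hf0 hB hni x).deriv]
    exact Vs_hasDeriv hα hf hf0 hB hni x
  · have h := Vs_deriv2 hα hf hf0 hB hni x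
    rwa [ft_eq (Vs_nonneg hα hf hf0 hB hni hx)] at h
  · -- uniqueness
    rintro W ⟨hW0, hW1, hWode⟩
    set A : Set ℝ := {t : ℝ | 0 ≤ t ∧ ∀ y ∈ Icc 0 t, 0 < deriv W y} with hA
    have hFB2 : Fint (ft f) B = α ^ 2 / 2 := by
      rw [Fint_ft_eq hB0.le]; linarith [hB.1.2]
    have key : ∀ t ∈ A, ∀ y ∈ Icc 0 t, W y = Vs f α B y ∧
        (deriv W y) ^ 2 = α ^ 2 - 2 * Fint (ft f) (W y) := by
      rintro t ⟨ht0, hpos⟩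
      have hWd : ∀ y ∈ Icc 0 t, HasDerivAt W (deriv W y) y :=
        fun y hy => (hWode y hy.1).1
      have hWcont : ContinuousOn W (Icc 0 t) :=
        fun y hy => (hWd y hy).continuousAt.continuousWithinAt
      have hWsm : StrictMonoOn W (Icc 0 t) := by
        refine strictMonoOn_of_deriv_pos (convex_Icc 0 t) hWcont (fun y hy => ?_)
        rw [interior_Icc] at hy
        exact hpos y ⟨hy.1.le, hy.2.le⟩
      have hWnn : ∀ y ∈ Icc 0 t, 0 ≤ W y := by
        intro y hy
        have := hWsm.monotoneOn ⟨le_rfl, ht0⟩ hy hy.1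
        rwa [hW0] at this
      -- energy conservation
      set EW : ℝ → ℝ := fun z => (deriv W z) ^ 2 + 2 * Fint (ft f) (W z) with hEW
      have hEder : ∀ y ∈ Icc 0 t, HasDerivAt EW 0 y := by
        intro y hy
        have h1 : HasDerivAt (fun z => (deriv W z) ^ 2)
            ((2 : ℕ) * (deriv W y) ^ (2 - 1) * (-(f (W y)))) y :=
          ((hWode y hy.1).2).pow 2
        have h2 : HasDerivAt (fun z => Fint (ft f) (W z)) (ft f (W y) * deriv W y) y :=
          (Fder hf (W y)).comp y (hWode y hy.1).1
        have h3 := h1.add (h2.const_mul 2)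
        refine h3.congr_deriv ?_
        rw [ft_eq (hWnn y hy)]
        push_cast
        ring
      have hEcont : ContinuousOn EW (Icc 0 t) :=
        fun y hy => (hEder y hy).continuousAt.continuousWithinAt
      have hEconst : ∀ y ∈ Icc 0 t, EW y = EW 0 :=
        constant_of_has_deriv_right_zero hEcont
          (fun y hy => (hEder y ⟨hy.1, hy.2.le⟩).hasDerivWithinAt)
      have hE0 : EW 0 = α ^ 2 := by
        rw [hEW]
        simp only [hW0, hW1, Fint_zero]
        ring
      have henergy : ∀ y ∈ Icc 0 t, (deriv W y) ^ 2 = α ^ 2 - 2 * Fint (ft f) (W y) := by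
        intro y hy
        have := hEconst y hy
        rw [hE0] at this
        rw [hEW] at this
        simp only at this
        linarith
      -- W stays below B
      have hWltB : ∀ y ∈ Icc 0 t, W y < B := by
        intro y hy
        by_contra hcon
        push_neg at hcon
        have hmem : B ∈ Icc (W 0) (W y) := ⟨by rw [hW0]; exact hB0.le, hcon⟩
        obtain ⟨z, hz, hzeq⟩ := intermediate_value_Icc hy.1
          (hWcont.mono (Icc_subset_Icc le_rfl hy.2)) hmem
        have hz' : z ∈ Icc 0 t := ⟨hz.1, hz.2.trans hy.2⟩
        have h1 := henergy z hz'
        rw [hzeq, hFB2] at h1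
        have h2 := hpos z hz'
        nlinarith
      -- deriv W = g ∘ W
      have hWderiv_eq : ∀ y ∈ Icc 0 t, deriv W y = gf f α (W y) := by
        intro y hy
        have h1 : gf f α (W y) = Real.sqrt ((deriv W y) ^ 2) := by
          unfold gf
          rw [henergy y hy]
        rw [Real.sqrt_sq (hpos y hy).le] at h1
        exact h1.symm
      -- Ph ∘ W = id
      set D : ℝ → ℝ := fun z => Ph f α (W z) - z with hD
      have hDder : ∀ y ∈ Icc 0 t, HasDerivAt D 0 y := by
        intro y hy
        have h1 : HasDerivAt (fun z => Ph f α (W z))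
            ((gf f α (W y))⁻¹ * deriv W y) y :=
          (Ph_hasDeriv hα hf hf0 hB (hWltB y hy)).comp y (hWode y hy.1).1
        have h3 := h1.sub (hasDerivAt_id y)
        refine h3.congr_deriv ?_
        rw [hWderiv_eq y hy, inv_mul_cancel₀ (gf_pos hα hf hf0 hB (hWltB y hy)).ne', sub_self]
      have hDconst : ∀ y ∈ Icc 0 t, D y = D 0 :=
        constant_of_has_deriv_right_zero
          (fun y hy => (hDder y hy).continuousAt.continuousWithinAt)
          (fun y hy => (hDder y ⟨hy.1, hy.2.le⟩).hasDerivWithinAt)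
      have hD0 : D 0 = 0 := by
        rw [hD]
        simp only [hW0, sub_zero]
        exact Ph_zero' hα hf hf0 hB
      have hPhW : ∀ y ∈ Icc 0 t, Ph f α (W y) = y := by
        intro y hy
        have := hDconst y hy
        rw [hD0, hD] at this
        simp only at this
        linarith
      intro y hy
      refine ⟨?_, henergy y hy⟩
      have h := Vs_leftInv hα hf hf0 hB hni (hWltB y hy)
      rw [hPhW y hy] at h
      exact h.symm
    -- A is unbounded above
    have h0A : (0 : ℝ) ∈ A := by
      refine ⟨le_rfl, fun y hy => ?_⟩
      have hy0 : y = 0 := le_antisymm hy.2 hy.1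
      rw [hy0, hW1]
      exact hα
    have hAne : A.Nonempty := ⟨0, h0A⟩
    have hAub : ¬ BddAbove A := by
      intro hbdd
      set T : ℝ := sSup A with hT
      have hT0 : 0 ≤ T := le_csSup hbdd h0A
      have hposlt : ∀ y, 0 ≤ y → y < T → 0 < deriv W y := by
        intro y hy0 hyT
        obtain ⟨a, haA, hya⟩ := exists_lt_of_lt_csSup hAne hyT
        exact haA.2 y ⟨hy0, hya.le⟩
      have hW'c : ContinuousAt (deriv W) T := (hWode T hT0).2.continuousAt
      -- T is positive
      have hTpos : 0 < T := by
        have hc : ContinuousAt (deriv W) 0 := (hWode 0 self_mem_Ici).2.continuousAt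
        have hev : (deriv W) ⁻¹' (Ioi 0) ∈ 𝓝 (0 : ℝ) := by
          apply hc
          rw [hW1]
          exact Ioi_mem_nhds hα
        obtain ⟨ε, hε, hball⟩ := Metric.mem_nhds_iff.1 hev
        have hmem : ε / 2 ∈ A := by
          refine ⟨by linarith, fun y hy => ?_⟩
          have : y ∈ Metric.ball (0:ℝ) ε := by
            rw [Metric.mem_ball, Real.dist_eq, sub_zero, abs_of_nonneg hy.1]
            linarith [hy.2]
          exact hball this
        have := le_csSup hbdd hmem
        linarith
      have hderT0 : 0 ≤ deriv W T := by
        by_contra hcon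
        push_neg at hcon
        have hev : (deriv W) ⁻¹' (Iio 0) ∈ 𝓝 T := by
          apply hW'c
          exact Iio_mem_nhds hcon
        obtain ⟨ε, hε, hball⟩ := Metric.mem_nhds_iff.1 hev
        set y : ℝ := max 0 (T - ε / 2) with hy
        have hyT : y < T := by
          rw [hy, max_lt_iff]
          constructor <;> linarith
        have hy0 : 0 ≤ y := le_max_left _ _
        have hyb : y ∈ Metric.ball T ε := by
          rw [Metric.mem_ball, Real.dist_eq, abs_lt]
          constructor
          · have : T - ε / 2 ≤ y := le_max_right _ _
            linarith
          · linarith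
        have h5 := hball hyb
        rw [mem_preimage, mem_Iio] at h5
        have h6 := hposlt y hy0 hyT
        linarith
      rcases hderT0.lt_or_eq with hpos | hzero
      · -- deriv W T > 0 : contradict sSup
        have hev : (deriv W) ⁻¹' (Ioi 0) ∈ 𝓝 T := hW'c (Ioi_mem_nhds hpos)
        obtain ⟨ε, hε, hball⟩ := Metric.mem_nhds_iff.1 hev
        have hmem : T + ε / 2 ∈ A := by
          refine ⟨by linarith, fun y hy => ?_⟩
          rcases lt_or_ge y T with h | h
          · exact hposlt y hy.1 h
          · have : y ∈ Metric.ball T ε := by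
              rw [Metric.mem_ball, Real.dist_eq, abs_lt]
              constructor <;> [linarith; linarith [hy.2]]
            exact hball this
        have := le_csSup hbdd hmem
        linarith
      · -- deriv W T = 0 : contradiction via energy and limits
        have hWV : ∀ y ∈ Ico 0 T, W y = Vs f α B y ∧
            (deriv W y) ^ 2 = α ^ 2 - 2 * Fint (ft f) (W y) := by
          intro y hy
          obtain ⟨a, haA, hya⟩ := exists_lt_of_lt_csSup hAne hy.2
          exact key a haA y ⟨hy.1, hya.le⟩
        have hIco : Ico (0:ℝ) T ∈ 𝓝[<] T := by
          refine mem_nhdsWithin.2 ⟨Ioi 0, isOpen_Ioi, hTpos, ?_⟩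
          rintro z ⟨hz1, hz2⟩
          exact ⟨le_of_lt hz1, hz2⟩
        have hlimeq : ∀ (h₁ h₂ : ℝ → ℝ), ContinuousAt h₁ T → ContinuousAt h₂ T →
            (∀ y ∈ Ico 0 T, h₁ y = h₂ y) → h₁ T = h₂ T := by
          intro h₁ h₂ hc1 hc2 hagree
          have hev : h₁ =ᶠ[𝓝[<] T] h₂ := by
            filter_upwards [hIco] with y hy using hagree y hy
          have t1 : Tendsto h₁ (𝓝[<] T) (𝓝 (h₁ T)) :=
            hc1.continuousWithinAt.tendsto
          have t2 : Tendsto h₂ (𝓝[<] T) (𝓝 (h₂ T)) :=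
            hc2.continuousWithinAt.tendsto
          exact tendsto_nhds_unique (t1.congr' hev) t2
        have hWcT : ContinuousAt W T := (hWode T hT0).1.continuousAt
        have hWT : W T = Vs f α B T :=
          hlimeq W (Vs f α B) hWcT (Vs_continuousAt hα hf hf0 hB hni T)
            (fun y hy => (hWV y hy).1)
        have hWTB : W T < B := by
          rw [hWT]
          exact (Vs_spec hα hf hf0 hB hni T).1
        have hcE : ContinuousAt (fun y => (deriv W y) ^ 2 + 2 * Fint (ft f) (W y)) T := by
          have h1 : ContinuousAt (fun y => (deriv W y) ^ 2) T := hW'c.pow 2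
          have h2 : ContinuousAt (fun y => Fint (ft f) (W y)) T :=
            ((Fint_cont hf).continuousAt).comp hWcT
          exact h1.add (continuousAt_const.mul h2)
        have hen := hlimeq (fun y => (deriv W y) ^ 2 + 2 * Fint (ft f) (W y))
          (fun _ => α ^ 2) hcE continuousAt_const
          (fun y hy => by have := (hWV y hy).2; linarith)
        have hgsq := gsq_pos hα hf hf0 hB (W T) hWTB
        rw [← hzero] at hen
        nlinarith [hen, hgsq]
    -- conclude
    intro x hx
    rw [not_bddAbove_iff] at hAub
    obtain ⟨t, htA, hxt⟩ := hAub x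
    exact (key t htA x ⟨hx, hxt.le⟩).1
  · have hgp := gf_pos hα hf hf0 hB (Vs_spec hα hf hf0 hB hni x).1
    rw [(Vs_hasDeriv hα hf hf0 hB hni x).deriv]
    exact hgp
end
end

section
/- Suppose either (a) sup_{v>0} F(v) > 0 and, with α₀ := (2 sup_{v>0} F(v))^{1/2}, one has α > α₀, or α = α₀ together with α₀² > 2F(v) for all v > 0; or (b) sup_{v>0} F(v) ≤ 0. Set ℓ := ∫₀^∞ dr/√(α² − 2F(r)) ∈ (0,∞]. Then the stationary problem (E): v'' + f(v) = 0, v(0) = 0, v'(0) = α, has a unique solution V̂_α; it is defined exactly on [0,ℓ), satisfies V̂_α'(x) > 0 for all x ∈ [0,ℓ), and V̂_α(x) → ∞ as x → ℓ. -/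
open Set Filter Topology MeasureTheory
open scoped ENNReal

noncomputable section

namespace S13

variable (f : ℝ → ℝ) (α : ℝ)

/-- extension of `f` by `f 0` to the negatives -/
def fe : ℝ → ℝ := fun v => f (max v 0)

def Fe : ℝ → ℝ := fun v => ∫ s in (0:ℝ)..v, fe f s

def g : ℝ → ℝ := fun v => Real.sqrt (α ^ 2 - 2 * Fe f v)

def X : ℝ → ℝ := fun v => ∫ r in (0:ℝ)..v, (g f α r)⁻¹

def V : ℝ → ℝ := Function.invFun (X f α)

variable {f α}

theorem cont_fe (hf : ContinuousOn f (Ici 0)) : Continuous (fe f) :=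
  hf.comp_continuous (continuous_id.max continuous_const) (fun x => mem_Ici.2 (le_max_right _ _))

theorem Fe_eq (v : ℝ) (hv : 0 ≤ v) : Fe f v = ∫ s in (0:ℝ)..v, f s := by
  refine intervalIntegral.integral_congr (fun s hs => ?_)
  rw [uIcc_of_le hv] at hs
  simp [fe, max_eq_left hs.1]

theorem Fe_zero : Fe f 0 = 0 := by simp [Fe]

theorem Fe_nonpos (hf0 : f 0 = 0) (v : ℝ) (hv : v ≤ 0) : Fe f v = 0 := by
  have : Fe f v = ∫ s in (0:ℝ)..v, (0:ℝ) := by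
    refine intervalIntegral.integral_congr (fun s hs => ?_)
    rw [uIcc_of_ge hv] at hs
    simp [fe, max_eq_right hs.2, hf0]
  simp [this]

theorem hasDerivAt_Fe (hf : ContinuousOn f (Ici 0)) (v : ℝ) :
    HasDerivAt (Fe f) (fe f v) v := by
  have hc := cont_fe hf
  exact intervalIntegral.integral_hasDerivAt_right (hc.intervalIntegrable _ _)
    hc.aestronglyMeasurable.stronglyMeasurableAtFilter hc.continuousAt

end S13

namespace S13
variable {f : ℝ → ℝ} {α : ℝ}

theorem g_pos (hP : ∀ v, 2 * Fe f v < α ^ 2) (v : ℝ) : 0 < g f α v :=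
  Real.sqrt_pos.2 (by linarith [hP v])

theorem g_sq (hP : ∀ v, 2 * Fe f v < α ^ 2) (v : ℝ) :
    (g f α v) ^ 2 = α ^ 2 - 2 * Fe f v :=
  Real.sq_sqrt (by linarith [hP v])

theorem g_zero (hα : 0 < α) : g f α 0 = α := by
  simp [g, Fe_zero, Real.sqrt_sq hα.le]

theorem hasDerivAt_g (hf : ContinuousOn f (Ici 0)) (hP : ∀ v, 2 * Fe f v < α ^ 2)
    (v : ℝ) : HasDerivAt (g f α) (-(2 * fe f v) / (2 * g f α v)) v := by
  have h1 : HasDerivAt (fun w => α ^ 2 - 2 * Fe f w) (-(2 * fe f v)) v := by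
    simpa using ((hasDerivAt_Fe hf v).const_mul 2).const_sub (α ^ 2)
  exact h1.sqrt (by nlinarith [hP v])

theorem cont_g (hf : ContinuousOn f (Ici 0)) (hP : ∀ v, 2 * Fe f v < α ^ 2) :
    Continuous (g f α) := by
  have : Differentiable ℝ (g f α) := fun v => (hasDerivAt_g hf hP v).differentiableAt
  exact this.continuous

theorem cont_ginv (hf : ContinuousOn f (Ici 0)) (hP : ∀ v, 2 * Fe f v < α ^ 2) :
    Continuous (fun r => (g f α r)⁻¹) :=
  (cont_g hf hP).inv₀ (fun v => (g_pos hP v).ne')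

theorem hasDerivAt_X (hf : ContinuousOn f (Ici 0)) (hP : ∀ v, 2 * Fe f v < α ^ 2)
    (v : ℝ) : HasDerivAt (X f α) ((g f α v)⁻¹) v := by
  have hc := cont_ginv hf hP
  exact intervalIntegral.integral_hasDerivAt_right (hc.intervalIntegrable _ _)
    hc.aestronglyMeasurable.stronglyMeasurableAtFilter hc.continuousAt

theorem X_strictMono (hf : ContinuousOn f (Ici 0)) (hP : ∀ v, 2 * Fe f v < α ^ 2) :
    StrictMono (X f α) := by
  refine strictMono_of_deriv_pos (fun v => ?_)
  rw [(hasDerivAt_X hf hP v).deriv]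
  exact inv_pos.2 (g_pos hP v)

theorem X_zero : X f α 0 = 0 := by simp [X]

theorem X_neg (hα : 0 < α) (hf0 : f 0 = 0) (v : ℝ) (hv : v ≤ 0) :
    X f α v = v / α := by
  have : X f α v = ∫ r in (0:ℝ)..v, α⁻¹ := by
    refine intervalIntegral.integral_congr (fun s hs => ?_)
    rw [uIcc_of_ge hv] at hs
    rw [g, Fe_nonpos hf0 s hs.2]
    simp [Real.sqrt_sq hα.le]
  rw [this]
  simp [div_eq_mul_inv]

theorem cont_X (hf : ContinuousOn f (Ici 0)) (hP : ∀ v, 2 * Fe f v < α ^ 2) :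
    Continuous (X f α) :=
  (Differentiable.continuous (fun v => (hasDerivAt_X hf hP v).differentiableAt))

end S13

namespace S13

variable (f α) in
/-- `x` is in the (open-below) domain of the inverse of `X`. -/
def dom (x : ℝ) : Prop := ∃ n : ℕ, x < X f α n

namespace S13aux
variable {f : ℝ → ℝ} {α : ℝ}
variable (hα : 0 < α) (hf : ContinuousOn f (Ici 0)) (hf0 : f 0 = 0)
  (hP : ∀ v, 2 * Fe f v < α ^ 2)
include hα hf hf0 hP

theorem dom_mono {x y : ℝ} (hxy : y ≤ x) (hx : dom f α x) : dom f α y := by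
  obtain ⟨n, hn⟩ := hx; exact ⟨n, lt_of_le_of_lt hxy hn⟩

theorem dom_zero : dom f α 0 := by
  refine ⟨1, ?_⟩
  have := X_strictMono hf hP (show (0:ℝ) < 1 by norm_num)
  rw [X_zero] at this
  simpa using this

theorem X_surj {x : ℝ} (hx : dom f α x) : ∃ v, X f α v = x := by
  obtain ⟨n, hn⟩ := hx
  set a : ℝ := min (α * x) (-1) with ha
  have ha0 : a ≤ 0 := le_trans (min_le_right _ _) (by norm_num)
  have hXa : X f α a ≤ x := by
    rw [X_neg hα hf0 a ha0]
    rw [div_le_iff₀ hα]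
    calc a ≤ α * x := min_le_left _ _
      _ = x * α := mul_comm _ _
  have han : a ≤ (n:ℝ) := le_trans ha0 (Nat.cast_nonneg n)
  have := intermediate_value_Icc han ((cont_X hf hP).continuousOn)
  obtain ⟨v, _, hv⟩ := this ⟨hXa, hn.le⟩
  exact ⟨v, hv⟩

theorem XV {x : ℝ} (hx : dom f α x) : X f α (V f α x) = x :=
  Function.invFun_eq (X_surj hα hf hf0 hP hx)

theorem V_zero : V f α 0 = 0 := by
  have : V f α (X f α 0) = 0 :=
    Function.leftInverse_invFun (X_strictMono hf hP).injective 0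
  rwa [X_zero] at this

theorem V_lt_of_lt {x y : ℝ} (hx : dom f α x) (hy : dom f α y) (hxy : x < y) :
    V f α x < V f α y := by
  have h1 := XV hα hf hf0 hP hx
  have h2 := XV hα hf hf0 hP hy
  by_contra h
  push_neg at h
  have := (X_strictMono hf hP).monotone h
  rw [h1, h2] at this
  exact absurd this (not_le.2 hxy)

theorem V_le_iff {x y : ℝ} (hx : dom f α x) (hy : dom f α y) :
    V f α x ≤ V f α y ↔ x ≤ y := by
  rw [← (X_strictMono hf hP).le_iff_le, XV hα hf hf0 hP hx, XV hα hf hf0 hP hy]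

theorem continuousAt_V {x : ℝ} (hx : dom f α x) : ContinuousAt (V f α) x := by
  rw [Metric.continuousAt_iff]
  intro ε hε
  set v := V f α x with hv
  have hXv : X f α v = x := XV hα hf hf0 hP hx
  set ε' := ε / 2 with hε'
  have hε'0 : 0 < ε' := by positivity
  obtain ⟨n, hn⟩ : ∃ n : ℕ, v + ε' < n := exists_nat_gt (v + ε')
  have h1 : X f α (v - ε') < x := by
    rw [← hXv]; exact X_strictMono hf hP (by linarith)
  have h2 : x < X f α (v + ε') := by
    rw [← hXv]; exact X_strictMono hf hP (by linarith)
  refine ⟨min (x - X f α (v - ε')) (X f α (v + ε') - x), lt_min (by linarith) (by linarith), fun {y} hy => ?_⟩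
  rw [Real.dist_eq] at hy ⊢
  have hy1 : X f α (v - ε') < y := by
    have := abs_lt.1 hy
    have := min_le_left (x - X f α (v - ε')) (X f α (v + ε') - x)
    linarith [this, (abs_lt.1 hy).1]
  have hy2 : y < X f α (v + ε') := by
    have := min_le_right (x - X f α (v - ε')) (X f α (v + ε') - x)
    linarith [this, (abs_lt.1 hy).2]
  have hdy : dom f α y := ⟨n, lt_trans hy2 (X_strictMono hf hP (by linarith))⟩
  have hXVy : X f α (V f α y) = y := XV hα hf hf0 hP hdy
  have hl : v - ε' < V f α y := by
    by_contra h; push_neg at h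
    have := (X_strictMono hf hP).monotone h
    rw [hXVy] at this; linarith
  have hr : V f α y < v + ε' := by
    by_contra h; push_neg at h
    have := (X_strictMono hf hP).monotone h
    rw [hXVy] at this; linarith
  rw [abs_lt]; constructor <;> [linarith; linarith]

theorem hasDerivAt_V {x : ℝ} (hx : dom f α x) :
    HasDerivAt (V f α) (g f α (V f α x)) x := by
  obtain ⟨n, hn⟩ := hx
  have hev : ∀ᶠ y in 𝓝 x, X f α (V f α y) = y := by
    filter_upwards [Iio_mem_nhds hn] with y hy
    exact XV hα hf hf0 hP ⟨n, hy⟩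
  have := HasDerivAt.of_local_left_inverse (continuousAt_V hα hf hf0 hP ⟨n, hn⟩)
    (hasDerivAt_X hf hP (V f α x)) (inv_ne_zero (g_pos hP _).ne') hev
  rwa [inv_inv] at this

theorem deriv_V {x : ℝ} (hx : dom f α x) : deriv (V f α) x = g f α (V f α x) :=
  (hasDerivAt_V hα hf hf0 hP hx).deriv

theorem hasDerivAt_derivV {x : ℝ} (hx : dom f α x) :
    HasDerivAt (deriv (V f α)) (-(fe f (V f α x))) x := by
  obtain ⟨n, hn⟩ := hx
  have hgV : HasDerivAt (fun y => g f α (V f α y))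
      (-(2 * fe f (V f α x)) / (2 * g f α (V f α x)) * g f α (V f α x)) x :=
    (hasDerivAt_g hf hP (V f α x)).comp x (hasDerivAt_V hα hf hf0 hP ⟨n, hn⟩)
  have heq : (fun y => g f α (V f α y)) =ᶠ[𝓝 x] deriv (V f α) := by
    filter_upwards [Iio_mem_nhds hn] with y hy
    exact (deriv_V hα hf hf0 hP ⟨n, hy⟩).symm
  have := hgV.congr_of_eventuallyEq heq.symm
  have hg0 : g f α (V f α x) ≠ 0 := (g_pos hP _).ne'
  have : -(2 * fe f (V f α x)) / (2 * g f α (V f α x)) * g f α (V f α x)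
      = -(fe f (V f α x)) := by field_simp
  rw [← this]
  exact hgV.congr_of_eventuallyEq heq.symm

theorem V_nonneg {x : ℝ} (hx : dom f α x) (hx0 : 0 ≤ x) : 0 ≤ V f α x := by
  have := (V_le_iff hα hf hf0 hP (dom_zero hα hf hf0 hP) hx).2 hx0
  rwa [V_zero hα hf hf0 hP] at this

end S13aux
end S13

namespace S13
namespace S13aux
variable {f : ℝ → ℝ} {α : ℝ}
variable (hα : 0 < α) (hf : ContinuousOn f (Ici 0)) (hf0 : f 0 = 0)
  (hP : ∀ v, 2 * Fe f v < α ^ 2)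
include hα hf hf0 hP

theorem ell_eq :
    (∫⁻ r in Ioi (0:ℝ), ENNReal.ofReal ((Real.sqrt (α ^ 2 - 2 * ∫ s in (0:ℝ)..r, f s))⁻¹))
      = ⨆ n : ℕ, ENNReal.ofReal (X f α n) := by
  have hcong : (∫⁻ r in Ioi (0:ℝ),
      ENNReal.ofReal ((Real.sqrt (α ^ 2 - 2 * ∫ s in (0:ℝ)..r, f s))⁻¹))
      = ∫⁻ r in Ioi (0:ℝ), ENNReal.ofReal ((g f α r)⁻¹) := by
    refine setLIntegral_congr_fun measurableSet_Ioi ?_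
    intro r hr
    dsimp only
    rw [g, Fe_eq r (le_of_lt hr)]
  rw [hcong]
  set h : ℝ → ℝ≥0∞ := fun r => ENNReal.ofReal ((g f α r)⁻¹) with hh
  set ν := (volume : Measure ℝ).withDensity h with hν
  have happ : ∀ s : Set ℝ, MeasurableSet s → ν s = ∫⁻ r in s, h r :=
    fun s hs => withDensity_apply h hs
  have hunion : Ioi (0:ℝ) = ⋃ n : ℕ, Ioc (0:ℝ) n := by
    ext x
    simp only [mem_Ioi, mem_iUnion, mem_Ioc]
    constructor
    · intro hx
      obtain ⟨n, hn⟩ := exists_nat_ge x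
      exact ⟨n, hx, hn⟩
    · rintro ⟨n, hx, _⟩; exact hx
  have hdir : Directed (· ⊆ ·) (fun n : ℕ => Ioc (0:ℝ) n) := by
    refine (Monotone.directed_le ?_)
    intro m n hmn
    exact Ioc_subset_Ioc_right (by exact_mod_cast hmn)
  calc ∫⁻ r in Ioi (0:ℝ), h r = ν (Ioi 0) := (happ _ measurableSet_Ioi).symm
    _ = ν (⋃ n : ℕ, Ioc (0:ℝ) n) := by rw [hunion]
    _ = ⨆ n : ℕ, ν (Ioc (0:ℝ) n) := hdir.measure_iUnion
    _ = ⨆ n : ℕ, ENNReal.ofReal (X f α n) := by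
        refine iSup_congr (fun n => ?_)
        rw [happ _ measurableSet_Ioc]
        have hint : IntegrableOn (fun r => (g f α r)⁻¹) (Ioc (0:ℝ) n) :=
          (cont_ginv hf hP).integrableOn_Ioc
        have hnn : 0 ≤ᵐ[(volume : Measure ℝ).restrict (Ioc (0:ℝ) n)]
            (fun r => (g f α r)⁻¹) :=
          Filter.Eventually.of_forall (fun r => inv_nonneg.2 (g_pos hP r).le)
        rw [← MeasureTheory.ofReal_integral_eq_lintegral_ofReal hint hnn]
        congr 1
        rw [X, intervalIntegral.integral_of_le (by exact_mod_cast Nat.cast_nonneg n)]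
end S13aux
end S13

namespace S13
namespace S13aux
variable {f : ℝ → ℝ} {α : ℝ}
variable (hα : 0 < α) (hf : ContinuousOn f (Ici 0)) (hf0 : f 0 = 0)
  (hP : ∀ v, 2 * Fe f v < α ^ 2)
include hα hf hf0 hP

theorem energy (W : ℝ → ℝ) (t : ℝ)
    (hD : ∀ y ∈ Icc 0 t, HasDerivAt W (deriv W y) y ∧
      HasDerivAt (deriv W) (-(f (W y))) y)
    (hWnn : ∀ y ∈ Icc 0 t, 0 ≤ W y)
    (hW0 : W 0 = 0) (hW1 : deriv W 0 = α) :
    ∀ y ∈ Icc 0 t, (deriv W y) ^ 2 + 2 * Fe f (W y) = α ^ 2 := by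
  rcases le_or_gt t 0 with ht | ht
  · intro y hy
    have hy0 : y = 0 := le_antisymm (hy.2.trans ht) hy.1
    subst hy0
    rw [hW0, hW1, Fe_zero]; ring
  set E : ℝ → ℝ := fun y => (deriv W y) ^ 2 + 2 * Fe f (W y) with hE
  have hEderiv : ∀ y ∈ Icc 0 t, HasDerivAt E 0 y := by
    intro y hy
    have h1 : HasDerivAt (fun z => (deriv W z) ^ 2)
        (2 * deriv W y ^ 1 * (-(f (W y)))) y := (hD y hy).2.pow 2
    have h2 : HasDerivAt (fun z => 2 * Fe f (W z))
        (2 * (fe f (W y) * deriv W y)) y :=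
      (((hasDerivAt_Fe hf (W y)).comp y (hD y hy).1)).const_mul 2
    have h3 := h1.add h2
    have hfe : fe f (W y) = f (W y) := by
      rw [fe, max_eq_left (hWnn y hy)]
    rw [hfe] at h3
    exact h3.congr_deriv (by ring)
  have hEcont : ContinuousOn E (Icc 0 t) :=
    fun y hy => (hEderiv y hy).continuousAt.continuousWithinAt
  have := constant_of_has_deriv_right_zero hEcont
    (fun y hy => (hEderiv y (Ico_subset_Icc_self hy)).hasDerivWithinAt)
  intro y hy
  have h4 : E y = E 0 := this y hy
  have h5 : E 0 = α ^ 2 := by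
    simp only [hE, hW0, hW1, Fe_zero]; ring
  exact h4.trans h5

theorem derivW_pos (W : ℝ → ℝ) (x : ℝ) (hx0 : 0 ≤ x)
    (hD : ∀ y ∈ Icc 0 x, HasDerivAt W (deriv W y) y ∧
      HasDerivAt (deriv W) (-(f (W y))) y)
    (hW0 : W 0 = 0) (hW1 : deriv W 0 = α) :
    ∀ y ∈ Icc 0 x, 0 < deriv W y := by
  by_contra hcon
  push_neg at hcon
  obtain ⟨y₀, hy₀, hy₀'⟩ := hcon
  set K : Set ℝ := {y | y ∈ Icc 0 x ∧ deriv W y ≤ 0} with hK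
  have hKne : K.Nonempty := ⟨y₀, hy₀, hy₀'⟩
  have hKbdd : BddBelow K := ⟨0, fun y hy => hy.1.1⟩
  have hKclosed : IsClosed K := by
    refine IsSeqClosed.isClosed ?_
    intro u p hu hp
    have hpI : p ∈ Icc 0 x :=
      isClosed_Icc.mem_of_tendsto hp (Eventually.of_forall (fun n => (hu n).1))
    refine ⟨hpI, ?_⟩
    have hcont : ContinuousAt (deriv W) p := (hD p hpI).2.continuousAt
    exact le_of_tendsto (hcont.tendsto.comp hp) (Eventually.of_forall (fun n => (hu n).2))
  set s := sInf K with hs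
  have hsK : s ∈ K := hKclosed.csInf_mem hKne hKbdd
  have hs0 : 0 < s := by
    rcases lt_or_eq_of_le hsK.1.1 with h | h
    · exact h
    · exfalso
      have h2 := hsK.2
      rw [← h, hW1] at h2
      linarith
  have hlt : ∀ y, 0 ≤ y → y < s → 0 < deriv W y := by
    intro y hy hys
    by_contra h
    push_neg at h
    have : y ∈ K := ⟨⟨hy, hys.le.trans hsK.1.2⟩, h⟩
    exact absurd (csInf_le hKbdd this) (not_le.2 hys)
  -- W is nonneg on Icc 0 s
  have hsub : Icc (0:ℝ) s ⊆ Icc 0 x := Icc_subset_Icc le_rfl hsK.1.2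
  have hWmono : StrictMonoOn W (Icc 0 s) := by
    refine strictMonoOn_of_deriv_pos (convex_Icc 0 s)
      (fun y hy => (hD y (hsub hy)).1.continuousAt.continuousWithinAt) ?_
    intro y hy
    rw [interior_Icc] at hy
    exact hlt y hy.1.le hy.2
  have hWnn : ∀ y ∈ Icc 0 s, 0 ≤ W y := by
    intro y hy
    rcases eq_or_lt_of_le hy.1 with h | h
    · rw [← h, hW0]
    · have := hWmono ⟨le_rfl, hs0.le⟩ hy h
      rw [hW0] at this; exact this.le
  have hEn := energy hα hf hf0 hP W s (fun y hy => hD y (hsub hy)) hWnn hW0 hW1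
  have hEs := hEn s ⟨hs0.le, le_rfl⟩
  have hne : (deriv W s) ^ 2 ≠ 0 := by
    have := hP (W s); intro h; rw [h] at hEs; linarith
  have hneg : deriv W s < 0 := lt_of_le_of_ne hsK.2 (fun h => hne (by rw [h]; ring))
  have hge : 0 ≤ deriv W s := by
    have hcont : ContinuousAt (deriv W) s := (hD s hsK.1).2.continuousAt
    have htend : Tendsto (deriv W) (𝓝[<] s) (𝓝 (deriv W s)) :=
      hcont.tendsto.mono_left nhdsWithin_le_nhds
    refine ge_of_tendsto htend ?_
    filter_upwards [Ioo_mem_nhdsLT_of_mem (⟨hs0, le_rfl⟩ : s ∈ Ioc 0 s)] with y hy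
    exact (hlt y hy.1.le hy.2).le
  linarith

theorem uniqueness (W : ℝ → ℝ) (x : ℝ) (hx0 : 0 ≤ x) (hx : dom f α x)
    (hD : ∀ y ∈ Icc 0 x, HasDerivAt W (deriv W y) y ∧
      HasDerivAt (deriv W) (-(f (W y))) y)
    (hW0 : W 0 = 0) (hW1 : deriv W 0 = α) :
    W x = V f α x := by
  have hpos := derivW_pos hα hf hf0 hP W x hx0 hD hW0 hW1
  have hWmono : StrictMonoOn W (Icc 0 x) := by
    refine strictMonoOn_of_deriv_pos (convex_Icc 0 x)
      (fun y hy => (hD y hy).1.continuousAt.continuousWithinAt) ?_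
    intro y hy
    rw [interior_Icc] at hy
    exact hpos y ⟨hy.1.le, hy.2.le⟩
  have hWnn : ∀ y ∈ Icc 0 x, 0 ≤ W y := by
    intro y hy
    rcases eq_or_lt_of_le hy.1 with h | h
    · rw [← h, hW0]
    · have := hWmono ⟨le_rfl, hx0⟩ hy h
      rw [hW0] at this; exact this.le
  have hEn := energy hα hf hf0 hP W x hD hWnn hW0 hW1
  have hWg : ∀ y ∈ Icc 0 x, deriv W y = g f α (W y) := by
    intro y hy
    have h1 : (deriv W y) ^ 2 = (g f α (W y)) ^ 2 := by
      rw [g_sq hP]; linarith [hEn y hy]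
    calc deriv W y = Real.sqrt ((deriv W y) ^ 2) :=
          (Real.sqrt_sq (hpos y hy).le).symm
      _ = Real.sqrt ((g f α (W y)) ^ 2) := by rw [h1]
      _ = g f α (W y) := Real.sqrt_sq (g_pos hP _).le
  -- X ∘ W - id is constant
  set h2 : ℝ → ℝ := fun y => X f α (W y) - y with hh2
  have hh2deriv : ∀ y ∈ Icc 0 x, HasDerivAt h2 0 y := by
    intro y hy
    have hXW : HasDerivAt (fun z => X f α (W z)) ((g f α (W y))⁻¹ * deriv W y) y :=
      (hasDerivAt_X hf hP (W y)).comp y (hD y hy).1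
    have : (g f α (W y))⁻¹ * deriv W y = 1 := by
      rw [hWg y hy]
      exact inv_mul_cancel₀ (g_pos hP _).ne'
    rw [this] at hXW
    have h5 := hXW.sub (hasDerivAt_id' y)
    rw [sub_self] at h5
    exact h5
  have hcst := constant_of_has_deriv_right_zero
    (fun y hy => (hh2deriv y hy).continuousAt.continuousWithinAt)
    (fun y hy => (hh2deriv y (Ico_subset_Icc_self hy)).hasDerivWithinAt)
  have h3 : h2 x = h2 0 := hcst x ⟨hx0, le_rfl⟩
  have h4 : X f α (W x) = x := by
    simp only [hh2, hW0, X_zero] at h3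
    linarith
  have h5 : X f α (V f α x) = x := XV hα hf hf0 hP hx
  exact (X_strictMono hf hP).injective (by rw [h4, h5])

end S13aux
end S13


open S13 S13.S13aux

/-- Lemma 2.7 (iii): in the case `α > α₀`, or `α = α₀` with
`α₀² > 2F(v)` for all `v > 0` (cases expressed without `sup` by: `∃ β < α²` bounding
`2F` on `[0,∞)`, respectively `2F < α²` on `(0,∞)` with `α²` the least upper bound), or
when `sup_{v>0} F(v) ≤ 0`, the stationary problem `v'' + f(v) = 0`, `v(0) = 0`,
`v'(0) = α` has a unique solution `V̂_α`, defined exactly on `[0, ℓ)` where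
`ℓ = ∫₀^∞ dr/√(α² - 2F(r)) ∈ (0, ∞]`, strictly increasing, and blowing up to `∞`
as `x → ℓ`. -/
theorem statement13 (f : ℝ → ℝ) (α : ℝ) (hα : 0 < α)
    (hf : ContDiffOn ℝ 1 f (Ici 0)) (hf0 : f 0 = 0)
    (hcase :
      ((∃ v : ℝ, 0 < v ∧ 0 < Fint f v) ∧
        ((∃ β : ℝ, β < α ^ 2 ∧ ∀ v : ℝ, 0 ≤ v → 2 * Fint f v ≤ β) ∨
          ((∀ v : ℝ, 0 < v → 2 * Fint f v < α ^ 2) ∧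
            (∀ β : ℝ, β < α ^ 2 → ∃ v : ℝ, 0 < v ∧ β < 2 * Fint f v)))) ∨
      (∀ v : ℝ, 0 < v → Fint f v ≤ 0))
    (ℓ : ℝ≥0∞)
    (hℓ : ℓ = ∫⁻ r in Ioi (0:ℝ), ENNReal.ofReal ((Real.sqrt (α ^ 2 - 2 * Fint f r))⁻¹)) :
    ∃ V : ℝ → ℝ, V 0 = 0 ∧ deriv V 0 = α ∧
      (∀ x : ℝ, 0 ≤ x → ENNReal.ofReal x < ℓ →
        HasDerivAt V (deriv V x) x ∧ HasDerivAt (deriv V) (-(f (V x))) x ∧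
          0 < deriv V x) ∧
      (∀ W : ℝ → ℝ, W 0 = 0 → deriv W 0 = α →
        (∀ x : ℝ, 0 ≤ x → ENNReal.ofReal x < ℓ →
          HasDerivAt W (deriv W x) x ∧ HasDerivAt (deriv W) (-(f (W x))) x) →
        ∀ x : ℝ, 0 ≤ x → ENNReal.ofReal x < ℓ → W x = V x) ∧
      Tendsto V (if ℓ = ⊤ then atTop else 𝓝[<] ℓ.toReal) atTop := by
  have hfc : ContinuousOn f (Ici 0) := hf.continuousOn
  have hFint0 : Fint f 0 = 0 := by simp [Fint]
  have hP : ∀ v, 2 * Fe f v < α ^ 2 := by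
    intro v
    rcases le_or_gt 0 v with hv | hv
    · have hFe : Fe f v = Fint f v := Fe_eq v hv
      rw [hFe]
      rcases hcase with ⟨_, hc⟩ | hb
      · rcases hc with ⟨β, hβ, hbd⟩ | ⟨hlt, _⟩
        · linarith [hbd v hv]
        · rcases eq_or_lt_of_le hv with h | h
          · rw [← h, hFint0]; nlinarith
          · exact hlt v h
      · rcases eq_or_lt_of_le hv with h | h
        · rw [← h, hFint0]; nlinarith
        · have := hb v h; nlinarith
    · rw [Fe_nonpos hf0 v hv.le]; nlinarith
  have hℓ' : ℓ = ⨆ n : ℕ, ENNReal.ofReal (X f α n) := by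
    rw [hℓ]
    exact ell_eq hα hfc hf0 hP
  have hX0 : ∀ n : ℕ, 0 ≤ X f α n := by
    intro n
    have := (X_strictMono hfc hP).monotone (show (0:ℝ) ≤ n from Nat.cast_nonneg n)
    rwa [X_zero] at this
  have hdom_iff : ∀ x : ℝ, 0 ≤ x → (ENNReal.ofReal x < ℓ ↔ dom f α x) := by
    intro x hx
    rw [hℓ', lt_iSup_iff]
    constructor
    · rintro ⟨n, hn⟩
      exact ⟨n, (ENNReal.ofReal_lt_ofReal_iff_of_nonneg hx).1 hn⟩
    · rintro ⟨n, hn⟩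
      exact ⟨n, (ENNReal.ofReal_lt_ofReal_iff_of_nonneg hx).2 hn⟩
  refine ⟨V f α, V_zero hα hfc hf0 hP, ?_, ?_, ?_, ?_⟩
  · rw [deriv_V hα hfc hf0 hP (dom_zero hα hfc hf0 hP), V_zero hα hfc hf0 hP,
      g_zero hα]
  · intro x hx0 hxl
    have hd := (hdom_iff x hx0).1 hxl
    refine ⟨?_, ?_, ?_⟩
    · rw [deriv_V hα hfc hf0 hP hd]
      exact hasDerivAt_V hα hfc hf0 hP hd
    · have h := hasDerivAt_derivV hα hfc hf0 hP hd
      have hVnn := V_nonneg hα hfc hf0 hP hd hx0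
      rwa [fe, max_eq_left hVnn] at h
    · rw [deriv_V hα hfc hf0 hP hd]
      exact g_pos hP _
  · intro W hW0 hW1 hWode x hx0 hxl
    have hd := (hdom_iff x hx0).1 hxl
    refine uniqueness hα hfc hf0 hP W x hx0 hd ?_ hW0 hW1
    intro y hy
    exact hWode y hy.1
      ((hdom_iff y hy.1).2 (dom_mono hα hfc hf0 hP hy.2 hd))
  · split_ifs with hT
    · have hall : ∀ x : ℝ, dom f α x := by
        intro x
        by_contra h
        simp only [dom, not_exists, not_lt] at h
        have : ℓ ≤ ENNReal.ofReal x := by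
          rw [hℓ']
          exact iSup_le (fun n => ENNReal.ofReal_le_ofReal (h n))
        rw [hT] at this
        exact absurd this (by simp)
      rw [tendsto_atTop_atTop]
      intro b
      obtain ⟨n, hn⟩ := exists_nat_ge b
      refine ⟨X f α n, fun x hx => ?_⟩
      have hXVx := XV hα hfc hf0 hP (hall x)
      have : (n:ℝ) ≤ V f α x := by
        refine ((X_strictMono hfc hP).le_iff_le).1 ?_
        rw [hXVx]; exact hx
      linarith
    · set L := ℓ.toReal with hLdef
      have hLpos : ∀ n : ℕ, X f α n < L := by
        intro n
        have h1 : ENNReal.ofReal (X f α n) < ℓ := by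
          rw [hℓ']
          refine lt_of_lt_of_le ?_ (le_iSup (fun m : ℕ => ENNReal.ofReal (X f α (m:ℝ))) (n+1))
          refine (ENNReal.ofReal_lt_ofReal_iff_of_nonneg (hX0 n)).2 ?_
          exact X_strictMono hfc hP (by exact_mod_cast Nat.lt_succ_self n)
        have h2 : ℓ = ENNReal.ofReal L := (ENNReal.ofReal_toReal hT).symm
        rw [h2] at h1
        exact (ENNReal.ofReal_lt_ofReal_iff_of_nonneg (hX0 n)).1 h1
      have hdomL : ∀ x : ℝ, x < L → dom f α x := by
        intro x hx
        rcases le_or_gt 0 x with h | h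
        · refine (hdom_iff x h).1 ?_
          have h2 : ℓ = ENNReal.ofReal L := (ENNReal.ofReal_toReal hT).symm
          rw [h2]
          have hL0 : 0 < L := by
            have h0 := hLpos 0
            simpa [X_zero] using h0
          exact (ENNReal.ofReal_lt_ofReal_iff hL0).2 hx
        · obtain ⟨n, hn⟩ := dom_zero hα hfc hf0 hP
          exact ⟨n, lt_trans h hn⟩
      rw [tendsto_atTop]
      intro b
      obtain ⟨n, hn⟩ := exists_nat_ge b
      filter_upwards [Ioo_mem_nhdsLT_of_mem
        (⟨hLpos n, le_rfl⟩ : L ∈ Ioc (X f α n) L)] with x hx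
      have hdx := hdomL x hx.2
      have hXVx := XV hα hfc hf0 hP hdx
      have : (n:ℝ) ≤ V f α x := by
        refine ((X_strictMono hfc hP).le_iff_le).1 ?_
        rw [hXVx]; exact hx.1.le
      linarith
end
end
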